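/- Suppose the data (U,Y) are informative for interpolation at σ (so the uniqueness rank condition rank [H_n(U), 0; H_n(Y), γ_n(σ)] = rank [H_n(U); H_n(Y)] + 1 holds) and M_0,…,M_{k−1} are the moments of orders 0,…,k−1. Then there exists a unique M_k ∈ ℂ with Σ_{U,Y} ⊆ Σ^k_{σ,M_k} if and only if rank [H_n(U), 0, γ_n^{(k)}(σ); H_n(Y), γ_n(σ), Σ_{j=0}^{k−1} C(k,j) M_j γ_n^{(k−j)}(σ)] = rank [H_n(U), 0; H_n(Y), γ_n(σ)]. -/

import Mathlib

open Matrix Finset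

-- ===== pinned declarations =====
/-- Hankel matrix of depth `n` built from data `W = (w_0, …, w_T)`. -/
def hankel (n T : ℕ) (h : n ≤ T) (W : Fin (T + 1) → ℝ) :
    Matrix (Fin (n + 1)) (Fin (T - n + 1)) ℝ :=
  Matrix.of fun i j => W ⟨i.1 + j.1, by omega⟩

/-- The order-`n` system with parameters `[q  -p]` explains the data `(U, Y)`. -/
def Explains (n T : ℕ) (h : n ≤ T) (U Y : Fin (T + 1) → ℝ)
    (q : Fin (n + 1) → ℝ) (p : Fin n → ℝ) : Prop :=
  ∀ j : Fin (T - n + 1),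
    ∑ i : Fin (n + 1), q i * U ⟨i.1 + j.1, by omega⟩
      - ∑ i : Fin n, p i * Y ⟨i.1 + j.1, by omega⟩ = Y ⟨n + j.1, by omega⟩

-- ===== auxiliary lemmas =====
namespace Stmt11Aux

lemma iteratedDeriv_add' {m : ℕ} {f g : ℂ → ℂ} (hf : ContDiff ℂ m f) (hg : ContDiff ℂ m g)
    (x : ℂ) :
    iteratedDeriv m (fun z => f z + g z) x = iteratedDeriv m f x + iteratedDeriv m g x := by
  rw [← iteratedDerivWithin_univ, ← iteratedDerivWithin_univ, ← iteratedDerivWithin_univ]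
  exact iteratedDerivWithin_add (Set.mem_univ x) uniqueDiffOn_univ hf.contDiffWithinAt hg.contDiffWithinAt

lemma iteratedDeriv_const_mul' {m : ℕ} {f : ℂ → ℂ} (hf : ContDiff ℂ m f) (c : ℂ) (x : ℂ) :
    iteratedDeriv m (fun z => c * f z) x = c * iteratedDeriv m f x := by
  rw [← iteratedDerivWithin_univ, ← iteratedDerivWithin_univ]
  exact iteratedDerivWithin_const_mul (Set.mem_univ x) uniqueDiffOn_univ c hf.contDiffWithinAt

lemma iteratedDeriv_sum' {α : Type*} {m : ℕ} (s : Finset α) (f : α → ℂ → ℂ)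
    (h : ∀ a ∈ s, ContDiff ℂ m (f a)) (x : ℂ) :
    iteratedDeriv m (fun z => ∑ a ∈ s, f a z) x = ∑ a ∈ s, iteratedDeriv m (f a) x := by
  classical
  induction s using Finset.induction with
  | empty =>
    have : ∀ (mm : ℕ), iteratedDeriv mm (fun _ : ℂ => (0:ℂ)) x = 0 := by
      intro mm
      induction mm with
      | zero => simp [iteratedDeriv_zero]
      | succ mm ih =>
        rw [iteratedDeriv_succ']
        simpa using ih
    simpa using this m
  | @insert a s ha ih =>
    rw [Finset.sum_insert ha]
    have hs : ∀ b ∈ s, ContDiff ℂ m (f b) := fun b hb => h b (Finset.mem_insert_of_mem hb)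
    have : iteratedDeriv m (fun z => f a z + ∑ b ∈ s, f b z) x
        = iteratedDeriv m (f a) x + iteratedDeriv m (fun z => ∑ b ∈ s, f b z) x :=
      iteratedDeriv_add' (h a (Finset.mem_insert_self a s))
        (ContDiff.sum fun b hb => hs b hb) x
    simp only [Finset.sum_insert ha] at *
    rw [this, ih hs]

lemma iteratedDeriv_poly {N : ℕ} (m : ℕ) (coef : Fin N → ℂ) (expo : Fin N → ℕ) (x : ℂ) :
    iteratedDeriv m (fun z => ∑ i, coef i * z ^ expo i) x
      = ∑ i, coef i * iteratedDeriv m (fun z => z ^ expo i) x := by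
  rw [iteratedDeriv_sum' Finset.univ (fun i z => coef i * z ^ expo i)
    (fun i _ => contDiff_const.mul (contDiff_id.pow (expo i))) x]
  exact Finset.sum_congr rfl fun i _ =>
    iteratedDeriv_const_mul' (contDiff_id.pow (expo i)) (coef i) x

lemma rank_add_nullity {K ι κ : Type*} [Field K] [Fintype ι] [Fintype κ] [DecidableEq ι]
    (M : Matrix ι κ K) :
    M.rank + Module.finrank K (LinearMap.ker (Mᵀ.mulVecLin)) = Fintype.card ι := by
  rw [← Matrix.rank_transpose M, Matrix.rank]
  have := LinearMap.finrank_range_add_finrank_ker (Mᵀ.mulVecLin)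
  rwa [Module.finrank_pi] at this

lemma rank_eq_rank_iff_ker {K ι κ₁ κ₂ : Type*} [Field K] [Fintype ι] [Fintype κ₁] [Fintype κ₂]
    [DecidableEq ι] (M₁ : Matrix ι κ₁ K) (M₂ : Matrix ι κ₂ K)
    (hle : LinearMap.ker (M₂ᵀ.mulVecLin) ≤ LinearMap.ker (M₁ᵀ.mulVecLin)) :
    M₂.rank = M₁.rank ↔ LinearMap.ker (M₁ᵀ.mulVecLin) ≤ LinearMap.ker (M₂ᵀ.mulVecLin) := by
  have h1 := rank_add_nullity M₁
  have h2 := rank_add_nullity M₂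
  constructor
  · intro h
    have hfr : Module.finrank K (LinearMap.ker (M₁ᵀ.mulVecLin))
        ≤ Module.finrank K (LinearMap.ker (M₂ᵀ.mulVecLin)) := by omega
    exact le_of_eq (Submodule.eq_of_le_of_finrank_le hle hfr).symm
  · intro h
    have : LinearMap.ker (M₁ᵀ.mulVecLin) = LinearMap.ker (M₂ᵀ.mulVecLin) := le_antisymm h hle
    rw [this] at h1
    omega



section Core

variable {ι κ : Type*} [Fintype ι]

lemma sum_coe_mul_add (v w : ι → ℝ) (x : ι → ℂ) :
    ∑ i, ((v + w) i : ℂ) * x i = (∑ i, (v i : ℂ) * x i) + ∑ i, (w i : ℂ) * x i := by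
  rw [← Finset.sum_add_distrib]
  refine Finset.sum_congr rfl fun i _ => ?_
  simp only [Pi.add_apply]
  push_cast
  ring

lemma sum_coe_mul_smul (t : ℝ) (w : ι → ℝ) (x : ι → ℂ) :
    ∑ i, ((t • w) i : ℂ) * x i = (t : ℂ) * ∑ i, (w i : ℂ) * x i := by
  rw [Finset.mul_sum]
  refine Finset.sum_congr rfl fun i _ => ?_
  simp only [Pi.smul_apply, smul_eq_mul]
  push_cast
  ring

lemma vecMul_coe_eq_zero (B : Matrix ι κ ℝ) (w : ι → ℝ) (hw : w ᵥ* B = 0) :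
    (fun i => (w i : ℂ)) ᵥ* (B.map (Complex.ofReal)) = 0 := by
  funext j
  have := congrFun hw j
  simp only [Matrix.vecMul, dotProduct, Pi.zero_apply, Matrix.map_apply] at this ⊢
  exact_mod_cast this

lemma vecMul_re_im (B : Matrix ι κ ℝ) (u : ι → ℂ)
    (hu : u ᵥ* (B.map (Complex.ofReal)) = 0) :
    (fun i => (u i).re) ᵥ* B = 0 ∧ (fun i => (u i).im) ᵥ* B = 0 := by
  constructor <;> funext j <;>
  · have := congrFun hu j
    simp only [Matrix.vecMul, dotProduct, Pi.zero_apply, Matrix.map_apply] at this ⊢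
    have hre := congrArg Complex.re this
    have him := congrArg Complex.im this
    simp only [Complex.re_sum, Complex.im_sum, Complex.mul_re, Complex.mul_im,
      Complex.ofReal_re, Complex.ofReal_im, mul_zero, zero_mul, add_zero, sub_zero,
      Complex.zero_re, Complex.zero_im, zero_add] at hre him
    first
    | exact hre
    | exact him

lemma sum_mul_re_im (u : ι → ℂ) (x : ι → ℂ) :
    ∑ i, u i * x i
      = (∑ i, ((u i).re : ℂ) * x i) + Complex.I * ∑ i, ((u i).im : ℂ) * x i := by
  rw [Finset.mul_sum, ← Finset.sum_add_distrib]
  refine Finset.sum_congr rfl fun i _ => ?_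
  conv_lhs => rw [← Complex.re_add_im (u i)]
  ring

lemma core (B : Matrix ι κ ℝ) (c d : ι → ℂ) (i0 : ι)
    (h1 : ∃ w : ι → ℝ, w ᵥ* B = 0 ∧ w i0 = -1)
    (h2 : ∃ u : ι → ℂ, u ᵥ* (B.map (Complex.ofReal)) = 0 ∧ ∑ i, u i * c i ≠ 0) :
    (∃! Mk : ℂ, ∀ w : ι → ℝ, w ᵥ* B = 0 → w i0 = -1 →
        (∑ i, (w i : ℂ) * d i) + Mk * (∑ i, (w i : ℂ) * c i) = 0) ↔
      (∀ u : ι → ℂ, u ᵥ* (B.map (Complex.ofReal)) = 0 →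
        ∑ i, u i * c i = 0 → ∑ i, u i * d i = 0) := by
  obtain ⟨v0, hv0B, hv0i⟩ := h1
  -- a real left-null vector pairing nontrivially with c
  obtain ⟨w0, hw0B, hw0c⟩ : ∃ w : ι → ℝ, w ᵥ* B = 0 ∧ ∑ i, (w i : ℂ) * c i ≠ 0 := by
    obtain ⟨u, huB, huc⟩ := h2
    obtain ⟨hre, him⟩ := vecMul_re_im B u huB
    by_cases hr : ∑ i, (((u i).re : ℝ) : ℂ) * c i = 0
    · refine ⟨fun i => (u i).im, him, fun hcontra => huc ?_⟩
      rw [sum_mul_re_im u c, hr, hcontra]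
      simp
    · exact ⟨fun i => (u i).re, hre, hr⟩
  -- normalise to an "explaining-form" vector pairing nontrivially with c
  obtain ⟨w1, hw1B, hw1i, hw1c⟩ : ∃ w : ι → ℝ, w ᵥ* B = 0 ∧ w i0 = -1
      ∧ ∑ i, (w i : ℂ) * c i ≠ 0 := by
    by_cases hβ : w0 i0 = 0
    · by_cases hvc : ∑ i, (v0 i : ℂ) * c i = 0
      · refine ⟨v0 + w0, ?_, ?_, ?_⟩
        · rw [Matrix.add_vecMul, hv0B, hw0B, add_zero]
        · simp [Pi.add_apply, hv0i, hβ]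
        · rw [sum_coe_mul_add, hvc, zero_add]; exact hw0c
      · exact ⟨v0, hv0B, hv0i, hvc⟩
    · refine ⟨(-(w0 i0)⁻¹) • w0, ?_, ?_, ?_⟩
      · rw [Matrix.smul_vecMul, hw0B, smul_zero]
      · simp [Pi.smul_apply, smul_eq_mul]
        field_simp
      · rw [sum_coe_mul_smul]
        push_cast
        exact mul_ne_zero (by simp [hβ]) hw0c
  constructor
  · -- existence+uniqueness → orthogonality
    rintro ⟨Mk, hMk, -⟩ u huB huc
    have key : ∀ w : ι → ℝ, w ᵥ* B = 0 →
        (∑ i, (w i : ℂ) * d i) + Mk * (∑ i, (w i : ℂ) * c i) = 0 := by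
      intro w hwB
      by_cases hβ : w i0 = 0
      · have h1 := hMk v0 hv0B hv0i
        have h2 := hMk (v0 + w) (by rw [Matrix.add_vecMul, hv0B, hwB, add_zero])
          (by simp [Pi.add_apply, hv0i, hβ])
        rw [sum_coe_mul_add, sum_coe_mul_add] at h2
        have := sub_eq_zero.mpr (h2.trans h1.symm)
        linear_combination h2 - h1
      · have h3 := hMk ((-(w i0)⁻¹) • w)
          (by rw [Matrix.smul_vecMul, hwB, smul_zero])
          (by simp [Pi.smul_apply, smul_eq_mul]; field_simp)
        rw [sum_coe_mul_smul, sum_coe_mul_smul] at h3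
        have hne : ((-(w i0)⁻¹ : ℝ) : ℂ) ≠ 0 := by
          simp [hβ]
        have h4 : ((-(w i0)⁻¹ : ℝ) : ℂ)
            * ((∑ i, (w i : ℂ) * d i) + Mk * (∑ i, (w i : ℂ) * c i)) = 0 := by
          linear_combination h3
        exact (mul_eq_zero.mp h4).resolve_left hne
    obtain ⟨hre, him⟩ := vecMul_re_im B u huB
    have hu_d := sum_mul_re_im u d
    have hu_c := sum_mul_re_im u c
    have kre := key (fun i => (u i).re) hre
    have kim := key (fun i => (u i).im) him
    rw [hu_c] at huc
    rw [hu_d]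
    linear_combination kre + Complex.I * kim - Mk * huc
  · -- orthogonality → existence+uniqueness
    intro hperp
    set Dc := ∑ i, (w1 i : ℂ) * c i with hDc
    set Dd := ∑ i, (w1 i : ℂ) * d i with hDd
    refine ⟨-(Dd / Dc), ?_, ?_⟩
    · intro w hwB hwi
      -- consider u := w - (dc w c / Dc) • w1 over ℂ
      set t : ℂ := (∑ i, (w i : ℂ) * c i) / Dc with ht
      set u : ι → ℂ := fun i => (w i : ℂ) - t * (w1 i : ℂ) with hu
      have huB : u ᵥ* (B.map (Complex.ofReal)) = 0 := by
        have hwC := vecMul_coe_eq_zero B w hwB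
        have hw1C := vecMul_coe_eq_zero B w1 hw1B
        funext j
        have h1 := congrFun hwC j
        have h2 := congrFun hw1C j
        simp only [Matrix.vecMul, dotProduct, Pi.zero_apply, hu] at h1 h2 ⊢
        have : ∑ i, ((w i : ℂ) - t * (w1 i : ℂ)) * (B.map Complex.ofReal) i j
            = (∑ i, (w i : ℂ) * (B.map Complex.ofReal) i j)
              - t * ∑ i, (w1 i : ℂ) * (B.map Complex.ofReal) i j := by
          rw [Finset.mul_sum, ← Finset.sum_sub_distrib]
          exact Finset.sum_congr rfl fun i _ => by ring
        rw [this, h1, h2]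
        ring
      have huc : ∑ i, u i * c i = 0 := by
        have : ∑ i, u i * c i = (∑ i, (w i : ℂ) * c i) - t * Dc := by
          simp only [hu, hDc]
          rw [Finset.mul_sum, ← Finset.sum_sub_distrib]
          exact Finset.sum_congr rfl fun i _ => by ring
        rw [this, ht]
        field_simp; ring
      have hud := hperp u huB huc
      have hsplit : ∑ i, u i * d i = (∑ i, (w i : ℂ) * d i) - t * Dd := by
        simp only [hu, hDd]
        rw [Finset.mul_sum, ← Finset.sum_sub_distrib]
        exact Finset.sum_congr rfl fun i _ => by ring
      rw [hsplit, sub_eq_zero] at hud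
      rw [hud, ht]
      field_simp
      ring
    · intro y hy
      have h1 := hy w1 hw1B hw1i
      have h2 : Dd + (-(Dd / Dc)) * Dc = 0 := by field_simp; ring
      have h3 : (y - (-(Dd / Dc))) * Dc = 0 := by linear_combination h1 - h2
      rcases mul_eq_zero.mp h3 with h | h
      · exact sub_eq_zero.mp h
      · exact absurd h hw1c
end Core


lemma sum_snoc_mul {n : ℕ} (p : Fin n → ℝ) (v : Fin (n + 1) → ℝ) :
    ∑ i : Fin (n + 1), (Fin.snoc p 1 : Fin (n + 1) → ℝ) i * v i
      = (∑ i : Fin n, p i * v i.castSucc) + v (Fin.last n) := by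
  rw [Fin.sum_univ_castSucc]
  simp

lemma sum_coe_snoc_mul {n : ℕ} (p : Fin n → ℝ) (v : Fin (n + 1) → ℂ) :
    ∑ i : Fin (n + 1), (((Fin.snoc p 1 : Fin (n + 1) → ℝ) i : ℝ) : ℂ) * v i
      = (∑ i : Fin n, ((p i : ℝ) : ℂ) * v i.castSucc) + v (Fin.last n) := by
  rw [Fin.sum_univ_castSucc]
  simp

lemma sum_elim_eq_zero {α β γ : Type*} [Zero γ] (f : α → γ) (g : β → γ) :
    Sum.elim f g = 0 ↔ f = 0 ∧ g = 0 := by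
  constructor
  · intro h
    exact ⟨funext fun a => congrFun h (Sum.inl a), funext fun b => congrFun h (Sum.inr b)⟩
  · rintro ⟨h1, h2⟩
    funext i
    rcases i with a | b
    · exact congrFun h1 a
    · exact congrFun h2 b

end Stmt11Aux

theorem stmt_11 (n T : ℕ) (hT : n ≤ T) (U Y : Fin (T + 1) → ℝ) (σ : ℂ)
    (k : ℕ) (hk : 0 < k) (M : ℕ → ℂ)
    (hne : ∃ (q : Fin (n + 1) → ℝ) (p : Fin n → ℝ), Explains n T hT U Y q p)
    (huniqrank : (Matrix.fromBlocks
        ((hankel n T hT U).map (Complex.ofReal : ℝ → ℂ))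
        (0 : Matrix (Fin (n + 1)) (Fin 1) ℂ)
        ((hankel n T hT Y).map (Complex.ofReal : ℝ → ℂ))
        (Matrix.of fun (i : Fin (n + 1)) (_ : Fin 1) => σ ^ (i : ℕ))).rank
      = (Matrix.fromRows
        ((hankel n T hT U).map (Complex.ofReal : ℝ → ℂ))
        ((hankel n T hT Y).map (Complex.ofReal : ℝ → ℂ))).rank + 1)
    (hlow : ∀ j < k, ∀ (q : Fin (n + 1) → ℝ) (p : Fin n → ℝ), Explains n T hT U Y q p →
      iteratedDeriv j (fun z : ℂ => ∑ i : Fin (n + 1), (q i : ℂ) * z ^ (i : ℕ)) σ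
        = ∑ i ∈ Finset.range (j + 1), (j.choose i : ℂ) * M i *
            iteratedDeriv (j - i)
              (fun z : ℂ => z ^ n + ∑ l : Fin n, (p l : ℂ) * z ^ (l : ℕ)) σ) :
    (∃! Mk : ℂ, ∀ (q : Fin (n + 1) → ℝ) (p : Fin n → ℝ), Explains n T hT U Y q p →
        iteratedDeriv k (fun z : ℂ => ∑ i : Fin (n + 1), (q i : ℂ) * z ^ (i : ℕ)) σ
          = (∑ j ∈ Finset.range k, (k.choose j : ℂ) * M j *
              iteratedDeriv (k - j)
                (fun z : ℂ => z ^ n + ∑ l : Fin n, (p l : ℂ) * z ^ (l : ℕ)) σ)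
            + Mk * (σ ^ n + ∑ l : Fin n, (p l : ℂ) * σ ^ (l : ℕ))) ↔
      (Matrix.fromBlocks
          ((hankel n T hT U).map (Complex.ofReal : ℝ → ℂ))
          (Matrix.of fun (i : Fin (n + 1)) (j : Fin 2) =>
            if j = 0 then 0 else iteratedDeriv k (fun z : ℂ => z ^ (i : ℕ)) σ)
          ((hankel n T hT Y).map (Complex.ofReal : ℝ → ℂ))
          (Matrix.of fun (i : Fin (n + 1)) (j : Fin 2) =>
            if j = 0 then σ ^ (i : ℕ)
            else ∑ l ∈ Finset.range k, (k.choose l : ℂ) * M l *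
              iteratedDeriv (k - l) (fun z : ℂ => z ^ (i : ℕ)) σ)).rank
        = (Matrix.fromBlocks
          ((hankel n T hT U).map (Complex.ofReal : ℝ → ℂ))
          (0 : Matrix (Fin (n + 1)) (Fin 1) ℂ)
          ((hankel n T hT Y).map (Complex.ofReal : ℝ → ℂ))
          (Matrix.of fun (i : Fin (n + 1)) (_ : Fin 1) => σ ^ (i : ℕ))).rank := by
  classical
  open Stmt11Aux in
  -- notation
  set Br : Matrix (Fin (n + 1) ⊕ Fin (n + 1)) (Fin (T - n + 1)) ℝ :=
    Matrix.fromRows (hankel n T hT U) (hankel n T hT Y) with hBr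
  set c : Fin (n + 1) ⊕ Fin (n + 1) → ℂ :=
    Sum.elim (fun _ => 0) (fun i => σ ^ (i : ℕ)) with hcdef
  set d : Fin (n + 1) ⊕ Fin (n + 1) → ℂ :=
    Sum.elim (fun i => iteratedDeriv k (fun z : ℂ => z ^ (i : ℕ)) σ)
      (fun i => ∑ l ∈ Finset.range k, (k.choose l : ℂ) * M l *
        iteratedDeriv (k - l) (fun z : ℂ => z ^ (i : ℕ)) σ) with hddef
  -- the `Explains` predicate in left-kernel form
  have hEx : ∀ (q : Fin (n + 1) → ℝ) (p : Fin n → ℝ),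
      Explains n T hT U Y q p ↔
        ((Sum.elim q (-(Fin.snoc p 1 : Fin (n + 1) → ℝ))) ᵥ* Br = 0) := by
    intro q p
    have hval : ∀ j : Fin (T - n + 1),
        ((Sum.elim q (-(Fin.snoc p 1 : Fin (n + 1) → ℝ))) ᵥ* Br) j
          = (∑ i : Fin (n + 1), q i * U ⟨i.1 + j.1, by omega⟩)
            - ((∑ i : Fin n, p i * Y ⟨i.1 + j.1, by omega⟩) + Y ⟨n + j.1, by omega⟩) := by
      intro j
      show ∑ i : Fin (n + 1) ⊕ Fin (n + 1),
        Sum.elim q (-(Fin.snoc p 1 : Fin (n + 1) → ℝ)) i * Br i j = _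
      rw [Fintype.sum_sum_type]
      simp only [Sum.elim_inl, Sum.elim_inr, Pi.neg_apply, hBr,
        Matrix.fromRows_apply_inl, Matrix.fromRows_apply_inr]
      simp only [neg_mul, Finset.sum_neg_distrib]
      rw [sum_snoc_mul p (fun i => hankel n T hT Y i j)]
      simp only [hankel, Matrix.of_apply, Fin.coe_castSucc, Fin.val_last]
      ring
    constructor
    · intro h
      funext j
      have hj := h j
      rw [hval j]
      simp only [Pi.zero_apply]
      linarith
    · intro h j
      have hj := congrFun h j
      rw [hval j] at hj
      simp only [Pi.zero_apply] at hj
      linarith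
  -- the moment condition in dot-product form
  have hMom : ∀ (q : Fin (n + 1) → ℝ) (p : Fin n → ℝ) (Mk : ℂ),
      (iteratedDeriv k (fun z : ℂ => ∑ i : Fin (n + 1), (q i : ℂ) * z ^ (i : ℕ)) σ
          = (∑ j ∈ Finset.range k, (k.choose j : ℂ) * M j *
              iteratedDeriv (k - j)
                (fun z : ℂ => z ^ n + ∑ l : Fin n, (p l : ℂ) * z ^ (l : ℕ)) σ)
            + Mk * (σ ^ n + ∑ l : Fin n, (p l : ℂ) * σ ^ (l : ℕ))) ↔
        ((∑ i, ((Sum.elim q (-(Fin.snoc p 1 : Fin (n + 1) → ℝ))) i : ℂ) * d i)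
          + Mk * (∑ i, ((Sum.elim q (-(Fin.snoc p 1 : Fin (n + 1) → ℝ))) i : ℂ) * c i) = 0) := by
    intro q p Mk
    have hQ : iteratedDeriv k (fun z : ℂ => ∑ i : Fin (n + 1), (q i : ℂ) * z ^ (i : ℕ)) σ
        = ∑ i : Fin (n + 1), (q i : ℂ) * iteratedDeriv k (fun z : ℂ => z ^ (i : ℕ)) σ :=
      iteratedDeriv_poly k (fun i => (q i : ℂ)) (fun i => (i : ℕ)) σ
    have hPfun : (fun z : ℂ => z ^ n + ∑ l : Fin n, (p l : ℂ) * z ^ (l : ℕ))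
        = fun z : ℂ => ∑ i : Fin (n + 1),
            (((Fin.snoc p 1 : Fin (n + 1) → ℝ) i : ℝ) : ℂ) * z ^ (i : ℕ) := by
      funext z
      rw [Fin.sum_univ_castSucc]
      simp only [Fin.snoc_castSucc, Fin.snoc_last, Fin.coe_castSucc, Fin.val_last,
        Complex.ofReal_one, one_mul]
      ring
    have hP : ∀ m : ℕ,
        iteratedDeriv m (fun z : ℂ => z ^ n + ∑ l : Fin n, (p l : ℂ) * z ^ (l : ℕ)) σ
          = ∑ i : Fin (n + 1), (((Fin.snoc p 1 : Fin (n + 1) → ℝ) i : ℝ) : ℂ)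
              * iteratedDeriv m (fun z : ℂ => z ^ (i : ℕ)) σ := by
      intro m
      rw [hPfun]
      exact iteratedDeriv_poly m _ _ σ
    have hPσ : (σ ^ n + ∑ l : Fin n, (p l : ℂ) * σ ^ (l : ℕ))
        = ∑ i : Fin (n + 1), (((Fin.snoc p 1 : Fin (n + 1) → ℝ) i : ℝ) : ℂ) * σ ^ (i : ℕ) := by
      have := congrFun hPfun σ
      simpa using this
    -- compute the two dot products
    have hdotc : (∑ i, ((Sum.elim q (-(Fin.snoc p 1 : Fin (n + 1) → ℝ))) i : ℂ) * c i)
        = -(σ ^ n + ∑ l : Fin n, (p l : ℂ) * σ ^ (l : ℕ)) := by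
      rw [Fintype.sum_sum_type]
      simp only [Sum.elim_inl, Sum.elim_inr, hcdef, Pi.neg_apply, mul_zero,
        Finset.sum_const_zero, zero_add, Complex.ofReal_neg, neg_mul,
        Finset.sum_neg_distrib]
      rw [sum_coe_snoc_mul p (fun i => σ ^ (i : ℕ))]
      rw [hPσ, Fin.sum_univ_castSucc]
      simp
    have hdotd : (∑ i, ((Sum.elim q (-(Fin.snoc p 1 : Fin (n + 1) → ℝ))) i : ℂ) * d i)
        = (∑ i : Fin (n + 1), (q i : ℂ) * iteratedDeriv k (fun z : ℂ => z ^ (i : ℕ)) σ)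
          - ∑ l ∈ Finset.range k, (k.choose l : ℂ) * M l *
              (∑ i : Fin (n + 1), (((Fin.snoc p 1 : Fin (n + 1) → ℝ) i : ℝ) : ℂ)
                * iteratedDeriv (k - l) (fun z : ℂ => z ^ (i : ℕ)) σ) := by
      rw [Fintype.sum_sum_type]
      simp only [Sum.elim_inl, Sum.elim_inr, hddef, Pi.neg_apply, Complex.ofReal_neg,
        neg_mul, Finset.sum_neg_distrib]
      have hstep : ∑ i : Fin (n + 1), (((Fin.snoc p 1 : Fin (n + 1) → ℝ) i : ℝ) : ℂ)
            * (∑ l ∈ Finset.range k, (k.choose l : ℂ) * M l *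
                iteratedDeriv (k - l) (fun z : ℂ => z ^ (i : ℕ)) σ)
          = ∑ l ∈ Finset.range k, (k.choose l : ℂ) * M l *
              (∑ i : Fin (n + 1), (((Fin.snoc p 1 : Fin (n + 1) → ℝ) i : ℝ) : ℂ)
                * iteratedDeriv (k - l) (fun z : ℂ => z ^ (i : ℕ)) σ) := by
        simp only [Finset.mul_sum]
        rw [Finset.sum_comm]
        refine Finset.sum_congr rfl fun l _ => Finset.sum_congr rfl fun i _ => by ring
      rw [hstep]
      ring
    rw [hQ, hdotc, hdotd]
    simp only [hP]
    constructor
    · intro h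
      linear_combination h
    · intro h
      linear_combination h
  -- matrices from the statement
  set Arows : Matrix (Fin (n + 1) ⊕ Fin (n + 1)) (Fin (T - n + 1)) ℂ :=
    Matrix.fromRows ((hankel n T hT U).map (Complex.ofReal : ℝ → ℂ))
      ((hankel n T hT Y).map (Complex.ofReal : ℝ → ℂ)) with hArows
  set Mone := Matrix.fromBlocks ((hankel n T hT U).map (Complex.ofReal : ℝ → ℂ))
      (0 : Matrix (Fin (n + 1)) (Fin 1) ℂ)
      ((hankel n T hT Y).map (Complex.ofReal : ℝ → ℂ))
      (Matrix.of fun (i : Fin (n + 1)) (_ : Fin 1) => σ ^ (i : ℕ)) with hMone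
  set Mtwo := Matrix.fromBlocks ((hankel n T hT U).map (Complex.ofReal : ℝ → ℂ))
      (Matrix.of fun (i : Fin (n + 1)) (j : Fin 2) =>
        if j = 0 then 0 else iteratedDeriv k (fun z : ℂ => z ^ (i : ℕ)) σ)
      ((hankel n T hT Y).map (Complex.ofReal : ℝ → ℂ))
      (Matrix.of fun (i : Fin (n + 1)) (j : Fin 2) =>
        if j = 0 then σ ^ (i : ℕ)
        else ∑ l ∈ Finset.range k, (k.choose l : ℂ) * M l *
          iteratedDeriv (k - l) (fun z : ℂ => z ^ (i : ℕ)) σ) with hMtwo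
  have hAeq : Arows = Br.map Complex.ofReal := by
    ext i j
    cases i <;> rfl
  have hF : ∀ u : Fin (n + 1) ⊕ Fin (n + 1) → ℂ,
      (u ∘ Sum.inl) ᵥ* ((hankel n T hT U).map (Complex.ofReal : ℝ → ℂ))
        + (u ∘ Sum.inr) ᵥ* ((hankel n T hT Y).map (Complex.ofReal : ℝ → ℂ))
      = u ᵥ* (Br.map Complex.ofReal) := by
    intro u
    funext j
    simp [Matrix.vecMul, dotProduct, Fintype.sum_sum_type, hBr,
      Matrix.map_apply, Matrix.fromRows_apply_inl, Matrix.fromRows_apply_inr,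
      Function.comp]
  have hM1char : ∀ u : Fin (n + 1) ⊕ Fin (n + 1) → ℂ,
      u ᵥ* Mone = 0 ↔ (u ᵥ* (Br.map Complex.ofReal) = 0 ∧ ∑ i, u i * c i = 0) := by
    intro u
    rw [hMone, Matrix.vecMul_fromBlocks, sum_elim_eq_zero, hF u]
    refine and_congr_right fun _ => ?_
    have hG : ∀ j : Fin 1, ((u ∘ Sum.inl) ᵥ* (0 : Matrix (Fin (n + 1)) (Fin 1) ℂ)
        + (u ∘ Sum.inr) ᵥ* (Matrix.of fun (i : Fin (n + 1)) (_ : Fin 1) => σ ^ (i : ℕ))) j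
        = ∑ i, u i * c i := by
      intro j
      simp [Matrix.vecMul, dotProduct, Fintype.sum_sum_type, hcdef, Function.comp]
    constructor
    · intro h
      rw [← hG 0]
      exact congrFun h 0
    · intro h
      funext j
      simpa only [hG j, Pi.zero_apply] using h
  have hM2char : ∀ u : Fin (n + 1) ⊕ Fin (n + 1) → ℂ,
      u ᵥ* Mtwo = 0 ↔ (u ᵥ* (Br.map Complex.ofReal) = 0 ∧ (∑ i, u i * c i = 0
        ∧ ∑ i, u i * d i = 0)) := by
    intro u
    rw [hMtwo, Matrix.vecMul_fromBlocks, sum_elim_eq_zero, hF u]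
    refine and_congr_right fun _ => ?_
    have hG0 : ((u ∘ Sum.inl) ᵥ* (Matrix.of fun (i : Fin (n + 1)) (j : Fin 2) =>
          if j = 0 then 0 else iteratedDeriv k (fun z : ℂ => z ^ (i : ℕ)) σ)
        + (u ∘ Sum.inr) ᵥ* (Matrix.of fun (i : Fin (n + 1)) (j : Fin 2) =>
          if j = 0 then σ ^ (i : ℕ)
          else ∑ l ∈ Finset.range k, (k.choose l : ℂ) * M l *
            iteratedDeriv (k - l) (fun z : ℂ => z ^ (i : ℕ)) σ)) 0
        = ∑ i, u i * c i := by
      simp [Matrix.vecMul, dotProduct, Fintype.sum_sum_type, hcdef, Function.comp]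
    have hG1 : ((u ∘ Sum.inl) ᵥ* (Matrix.of fun (i : Fin (n + 1)) (j : Fin 2) =>
          if j = 0 then 0 else iteratedDeriv k (fun z : ℂ => z ^ (i : ℕ)) σ)
        + (u ∘ Sum.inr) ᵥ* (Matrix.of fun (i : Fin (n + 1)) (j : Fin 2) =>
          if j = 0 then σ ^ (i : ℕ)
          else ∑ l ∈ Finset.range k, (k.choose l : ℂ) * M l *
            iteratedDeriv (k - l) (fun z : ℂ => z ^ (i : ℕ)) σ)) 1
        = ∑ i, u i * d i := by
      simp [Matrix.vecMul, dotProduct, Fintype.sum_sum_type, hddef, Function.comp]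
    constructor
    · intro h
      exact ⟨by rw [← hG0]; exact congrFun h 0, by rw [← hG1]; exact congrFun h 1⟩
    · rintro ⟨h1, h2⟩
      funext j
      fin_cases j
      · exact hG0.trans h1
      · exact hG1.trans h2
  have kerM1 : ∀ u : Fin (n + 1) ⊕ Fin (n + 1) → ℂ,
      u ∈ LinearMap.ker (Moneᵀ.mulVecLin)
        ↔ (u ᵥ* (Br.map Complex.ofReal) = 0 ∧ ∑ i, u i * c i = 0) := by
    intro u
    rw [LinearMap.mem_ker, Matrix.mulVecLin_apply, Matrix.mulVec_transpose]
    exact hM1char u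
  have kerM2 : ∀ u : Fin (n + 1) ⊕ Fin (n + 1) → ℂ,
      u ∈ LinearMap.ker (Mtwoᵀ.mulVecLin)
        ↔ (u ᵥ* (Br.map Complex.ofReal) = 0 ∧ (∑ i, u i * c i = 0 ∧ ∑ i, u i * d i = 0)) := by
    intro u
    rw [LinearMap.mem_ker, Matrix.mulVecLin_apply, Matrix.mulVec_transpose]
    exact hM2char u
  have kerA : ∀ u : Fin (n + 1) ⊕ Fin (n + 1) → ℂ,
      u ∈ LinearMap.ker (Arowsᵀ.mulVecLin) ↔ u ᵥ* (Br.map Complex.ofReal) = 0 := by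
    intro u
    rw [LinearMap.mem_ker, Matrix.mulVecLin_apply, Matrix.mulVec_transpose, hAeq]
  have h2c : ∃ u : Fin (n + 1) ⊕ Fin (n + 1) → ℂ,
      u ᵥ* (Br.map Complex.ofReal) = 0 ∧ ∑ i, u i * c i ≠ 0 := by
    by_contra hcon
    push_neg at hcon
    have hle : LinearMap.ker (Moneᵀ.mulVecLin) ≤ LinearMap.ker (Arowsᵀ.mulVecLin) := by
      intro u hu
      rw [kerA]
      exact ((kerM1 u).mp hu).1
    have hge : LinearMap.ker (Arowsᵀ.mulVecLin) ≤ LinearMap.ker (Moneᵀ.mulVecLin) := by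
      intro u hu
      rw [kerA] at hu
      exact (kerM1 u).mpr ⟨hu, hcon u hu⟩
    have hrk : Mone.rank = Arows.rank := (rank_eq_rank_iff_ker Arows Mone hle).mpr hge
    rw [hrk] at huniqrank
    omega
  have hle21 : LinearMap.ker (Mtwoᵀ.mulVecLin) ≤ LinearMap.ker (Moneᵀ.mulVecLin) := by
    intro u hu
    have h2 := (kerM2 u).mp hu
    exact (kerM1 u).mpr ⟨h2.1, h2.2.1⟩
  have hRHSiff : (Mtwo.rank = Mone.rank) ↔
      (∀ u : Fin (n + 1) ⊕ Fin (n + 1) → ℂ, u ᵥ* (Br.map Complex.ofReal) = 0 →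
        ∑ i, u i * c i = 0 → ∑ i, u i * d i = 0) := by
    rw [rank_eq_rank_iff_ker Mone Mtwo hle21]
    constructor
    · intro h u huA huc
      have hmem : u ∈ LinearMap.ker (Moneᵀ.mulVecLin) := (kerM1 u).mpr ⟨huA, huc⟩
      exact ((kerM2 u).mp (h hmem)).2.2
    · intro h u hu
      obtain ⟨hh1, hh2⟩ := (kerM1 u).mp hu
      exact (kerM2 u).mpr ⟨hh1, hh2, h u hh1 hh2⟩
  have h1c : ∃ w : Fin (n + 1) ⊕ Fin (n + 1) → ℝ,
      w ᵥ* Br = 0 ∧ w (Sum.inr (Fin.last n)) = -1 := by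
    obtain ⟨q, p, hqp⟩ := hne
    exact ⟨Sum.elim q (-(Fin.snoc p 1 : Fin (n + 1) → ℝ)), (hEx q p).mp hqp, by simp⟩
  have hKey : ∀ Mk : ℂ,
      (∀ (q : Fin (n + 1) → ℝ) (p : Fin n → ℝ), Explains n T hT U Y q p →
        iteratedDeriv k (fun z : ℂ => ∑ i : Fin (n + 1), (q i : ℂ) * z ^ (i : ℕ)) σ
          = (∑ j ∈ Finset.range k, (k.choose j : ℂ) * M j *
              iteratedDeriv (k - j)
                (fun z : ℂ => z ^ n + ∑ l : Fin n, (p l : ℂ) * z ^ (l : ℕ)) σ)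
            + Mk * (σ ^ n + ∑ l : Fin n, (p l : ℂ) * σ ^ (l : ℕ))) ↔
      (∀ w : Fin (n + 1) ⊕ Fin (n + 1) → ℝ, w ᵥ* Br = 0 → w (Sum.inr (Fin.last n)) = -1 →
        (∑ i, (w i : ℂ) * d i) + Mk * (∑ i, (w i : ℂ) * c i) = 0) := by
    intro Mk
    constructor
    · intro h w hwB hwi
      have hw_eq : Sum.elim (fun i => w (Sum.inl i))
          (-(Fin.snoc (fun l : Fin n => -(w (Sum.inr l.castSucc))) 1 : Fin (n + 1) → ℝ)) = w := by
        funext i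
        rcases i with i | i
        · rfl
        · induction i using Fin.lastCases with
          | last => simp [hwi]
          | cast i => simp
      have hexp : Explains n T hT U Y (fun i => w (Sum.inl i))
          (fun l : Fin n => -(w (Sum.inr l.castSucc))) :=
        (hEx _ _).mpr (by rw [hw_eq]; exact hwB)
      have hmm := (hMom _ _ Mk).mp (h _ _ hexp)
      rw [hw_eq] at hmm
      exact hmm
    · intro h q p hqp
      refine (hMom q p Mk).mpr ?_
      refine h _ ((hEx q p).mp hqp) ?_
      simp
  exact Iff.trans (existsUnique_congr fun Mk => hKey Mk)
    (Iff.trans (core Br c d (Sum.inr (Fin.last n)) h1c h2c) hRHSiff.symm)
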